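/- Let per = 010^e with e ≥ 3 over {0,1} with complement σ↦1−σ, and let q ∈ 0101·Σ*·11(1̄1̄)·Σ*·(1̄0̄0̄1̄0̄). For all positive integers a ≥ k, the hairpin completion distance from per^k · q · ⟵per^k to per^a · q · ⟵per^a equals Fib⁻¹(a/k), the least y with Fib(y) ≥ a/k. -/

import Mathlib

def Fib : ℕ → ℕ
  | 0 => 1
  | 1 => 1
  | n + 2 => Fib (n + 1) + Fib n

noncomputable def FibInv (x : ℝ) : ℕ := sInf {y : ℕ | x ≤ (Fib y : ℝ)}

def FibRegular (a : ℕ) : Prop :=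
  ∀ k : ℕ, 2 ≤ k → k ≤ a → FibInv (a : ℝ) ≤ FibInv ((a : ℝ) / (k : ℝ)) + k - 1

/-- characterwise complement followed by reversal: the "reverse complement" ⟵w -/
def rc (w : List Bool) : List Bool := (w.map (fun b => !b)).reverse

/-- one (modified) hairpin deletion step: remove a prefix (left) or suffix (right)
of length `ℓ ∈ [⌊|S|/2⌋]` that equals the reverse complement of the opposite end. -/
def HDel (S T : List Bool) : Prop :=
  ∃ ℓ, 1 ≤ ℓ ∧ ℓ ≤ S.length / 2 ∧ S.take ℓ = rc (S.drop (S.length - ℓ)) ∧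
    (T = S.drop ℓ ∨ T = S.take (S.length - ℓ))

/-- `HDelN n S T`: `T` is obtained from `S` by exactly `n` hairpin deletions. -/
def HDelN : ℕ → List Bool → List Bool → Prop
  | 0, S, T => S = T
  | n + 1, S, T => ∃ U, HDel S U ∧ HDelN n U T

/-- hairpin deletion distance (∞ if unreachable) -/
noncomputable def HDD (x y : List Bool) : ℕ∞ :=
  sInf {n : ℕ∞ | ∃ m : ℕ, n = (m : ℕ∞) ∧ HDelN m x y}

/-- one (modified) hairpin completion step -/
def HComp (S T : List Bool) : Prop :=
  ∃ ℓ, 1 ≤ ℓ ∧ ℓ ≤ S.length ∧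
    (T = S ++ rc (S.take ℓ) ∨ T = rc (S.drop (S.length - ℓ)) ++ S)

def HCompN : ℕ → List Bool → List Bool → Prop
  | 0, S, T => S = T
  | n + 1, S, T => ∃ U, HComp S U ∧ HCompN n U T

/-- hairpin completion distance (∞ if unreachable) -/
noncomputable def HCD (x y : List Bool) : ℕ∞ :=
  sInf {n : ℕ∞ | ∃ m : ℕ, n = (m : ℕ∞) ∧ HCompN m x y}

/-- `w` concatenated with itself `k` times, `w^k` -/
def repL (w : List Bool) (k : ℕ) : List Bool := (List.replicate k w).flatten


/-! ### infrastructure -/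

theorem Fib_pos (n : ℕ) : 1 ≤ Fib n := by
  induction n using Nat.strong_induction_on with
  | _ n ih =>
    match n with
    | 0 => simp [Fib]
    | 1 => simp [Fib]
    | n + 2 => have := ih (n+1) (by omega); simp only [Fib]; omega

theorem Fib_le_succ (n : ℕ) : Fib n ≤ Fib (n+1) := by
  match n with
  | 0 => simp [Fib]
  | n + 1 => have := Fib_pos n; simp only [Fib]; omega

theorem Fib_mono : Monotone Fib := monotone_nat_of_le_succ Fib_le_succ

theorem le_Fib (n : ℕ) : n ≤ Fib n := by
  induction n using Nat.strong_induction_on with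
  | _ n ih =>
    match n with
    | 0 => simp
    | 1 => simp [Fib]
    | n + 2 =>
      have h1 := ih (n+1) (by omega)
      have h2 := Fib_pos n
      simp only [Fib]; omega

@[simp] theorem rc_length (w : List Bool) : (rc w).length = w.length := by simp [rc]

theorem rc_append (w v : List Bool) : rc (w ++ v) = rc v ++ rc w := by simp [rc]

@[simp] theorem rc_rc (w : List Bool) : rc (rc w) = w := by
  simp [rc, List.map_reverse, Function.comp_def]

theorem rc_take (w : List Bool) (m : ℕ) (hm : m ≤ w.length) :
    rc (w.take m) = (rc w).drop (w.length - m) := by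
  have h := List.take_append_drop m w
  have h2 : rc w = rc (w.drop m) ++ rc (w.take m) := by
    conv_lhs => rw [← h]
    exact rc_append _ _
  have hlen : (rc (w.drop m)).length = w.length - m := by simp
  rw [h2]
  rw [List.drop_append_of_le_length (by omega)]
  rw [show (w.length - m) = (rc (w.drop m)).length from by omega]
  rw [List.drop_length]
  simp

theorem rc_drop (w : List Bool) (m : ℕ) (hm : m ≤ w.length) :
    rc (w.drop m) = (rc w).take (w.length - m) := by
  have h := List.take_append_drop m w
  have h2 : rc w = rc (w.drop m) ++ rc (w.take m) := by
    conv_lhs => rw [← h]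
    exact rc_append _ _
  rw [h2]
  have hlen : (rc (w.drop m)).length = w.length - m := by simp
  rw [List.take_append_of_le_length (by omega)]
  rw [List.take_of_length_le (by omega)]

theorem rc_getD (w : List Bool) (j : ℕ) (hj : j < w.length) :
    (rc w).getD j false = !(w.getD (w.length - 1 - j) false) := by
  simp only [rc]
  rw [List.getD_eq_getElem?_getD, List.getElem?_reverse (by simpa using hj)]
  rw [List.getElem?_map]
  rw [List.getD_eq_getElem?_getD]
  have : w.length - 1 - j < w.length := by omega
  rw [List.getElem?_eq_getElem (by simpa using this)]
  rw [List.getElem?_eq_getElem this]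
  simp

theorem repL_succ_aux (w : List Bool) (n : ℕ) : repL w (n+1) = w ++ repL w n := by
  simp [repL, List.replicate_succ]

@[simp] theorem repL_length (w : List Bool) (n : ℕ) : (repL w n).length = n * w.length := by
  induction n with
  | zero => simp [repL]
  | succ n ih =>
    rw [show n+1 = n+1 from rfl, repL_succ_aux, List.length_append, ih]
    ring

theorem repL_succ (w : List Bool) (n : ℕ) : repL w (n+1) = w ++ repL w n :=
  repL_succ_aux w n

theorem repL_add (w : List Bool) (m n : ℕ) : repL w (m+n) = repL w m ++ repL w n := by
  induction m with
  | zero => simp [repL]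
  | succ m ih =>
    have : m + 1 + n = (m + n) + 1 := by omega
    rw [this, repL_succ, ih, repL_succ]
    simp

theorem rc_repL (w : List Bool) (n : ℕ) : rc (repL w n) = repL (rc w) n := by
  induction n with
  | zero => simp [repL, rc]
  | succ n ih =>
    rw [repL_succ, rc_append, ih]
    have : repL (rc w) (n + 1) = repL (rc w) n ++ repL (rc w) 1 := by
      rw [← repL_add]
    rw [this]
    congr 1
    show rc w = (List.replicate 1 (rc w)).flatten
    simp

theorem getD_drop (l : List Bool) (m j : ℕ) :
    (l.drop m).getD j false = l.getD (m + j) false := by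
  rw [List.getD_eq_getElem?_getD, List.getD_eq_getElem?_getD, List.getElem?_drop]

theorem getD_take (l : List Bool) (m j : ℕ) (h : j < m) :
    (l.take m).getD j false = l.getD j false := by
  rw [List.getD_eq_getElem?_getD, List.getD_eq_getElem?_getD, List.getElem?_take, if_pos h]

theorem getD_true_lt (l : List Bool) (m : ℕ) (h : l.getD m false = true) : m < l.length := by
  by_contra hc
  rw [List.getD_eq_getElem?_getD, List.getElem?_eq_none (by omega)] at h
  simp at h

theorem repL_getD (w : List Bool) (n i : ℕ) (hw : 0 < w.length) (hi : i < n * w.length) :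
    (repL w n).getD i false = w.getD (i % w.length) false := by
  induction n generalizing i with
  | zero => omega
  | succ n ih =>
    rw [repL_succ]
    by_cases h : i < w.length
    · rw [List.getD_append _ _ _ _ h, Nat.mod_eq_of_lt h]
    · push_neg at h
      rw [List.getD_append_right _ _ _ _ h]
      obtain ⟨j, rfl⟩ : ∃ j, i = w.length + j := ⟨i - w.length, by omega⟩
      rw [Nat.add_mod_left]
      have : w.length + j - w.length = j := by omega
      rw [this]
      refine ih j ?_
      have : (n+1) * w.length = n * w.length + w.length := by ring
      omega

/-! ### the word per = 0 1 0^e and its reverse complement -/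

def pw (e : ℕ) : List Bool := false :: true :: List.replicate e false

@[simp] theorem pw_length (e : ℕ) : (pw e).length = e + 2 := by simp [pw]

theorem pw_getD (e m : ℕ) : (pw e).getD m false = decide (m = 1) := by
  match m with
  | 0 => simp [pw]
  | 1 => simp [pw]
  | (m+2) =>
    simp only [pw]
    rw [List.getD_cons_succ, List.getD_cons_succ]
    rw [List.getD_eq_getElem?_getD]
    rcases lt_or_ge m e with h | h
    · rw [List.getElem?_eq_getElem (by simpa using h)]
      simp [List.getElem_replicate]
    · rw [List.getElem?_eq_none (by simpa using h)]
      simp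

theorem rc_pw (e : ℕ) : rc (pw e) = List.replicate e true ++ [false, true] := by
  simp [rc, pw, List.map_replicate]

theorem rc_pw_getD (e m : ℕ) (hm : m < e + 2) :
    (rc (pw e)).getD m false = !decide (m = e) := by
  rw [rc_pw]
  rcases lt_or_ge m e with h | h
  · rw [List.getD_append _ _ _ _ (by simpa using h)]
    rw [List.getD_eq_getElem?_getD, List.getElem?_eq_getElem (by simpa using h)]
    simp [List.getElem_replicate]; omega
  · rw [List.getD_append_right _ _ _ _ (by simpa using h)]
    have hme : m = e ∨ m = e + 1 := by omega
    rcases hme with rfl | rfl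
    · simp
    · simp

/-- char of the left region `per^n` -/
theorem left_getD (e n i : ℕ) (hi : i < (e+2)*n) :
    (repL (pw e) n).getD i false = decide (i % (e+2) = 1) := by
  rw [repL_getD (pw e) n i (by simp) (by rw [pw_length, Nat.mul_comm]; exact hi)]
  rw [pw_length, pw_getD]

/-- char of the right region `(rc per)^n` -/
theorem right_getD (e n i : ℕ) (hi : i < (e+2)*n) :
    (repL (rc (pw e)) n).getD i false = !decide (i % (e+2) = e) := by
  rw [repL_getD (rc (pw e)) n i (by simp)
    (by rw [rc_length, pw_length, Nat.mul_comm]; exact hi)]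
  rw [rc_length, pw_length, rc_pw_getD e _ (Nat.mod_lt _ (by omega))]

/-! ### factor states of X_a -/

def LSg (e k Dn x : ℕ) : List Bool :=
  (repL (pw e) (k+Dn)).drop ((e+2)*(k+Dn) - ((e+2)*k + x))

def RSg (e k Dn y : ℕ) : List Bool := (repL (rc (pw e)) (k+Dn)).take ((e+2)*k + y)

def stg (e k Dn : ℕ) (qq : List Bool) (x y : ℕ) : List Bool :=
  LSg e k Dn x ++ qq ++ RSg e k Dn y

def Xag (e k Dn : ℕ) (qq : List Bool) : List Bool :=
  repL (pw e) (k+Dn) ++ qq ++ repL (rc (pw e)) (k+Dn)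

theorem LSg_length (e k Dn x : ℕ) (hx : x ≤ (e+2)*Dn) :
    (LSg e k Dn x).length = (e+2)*k + x := by
  simp [LSg]
  have h1 : (k+Dn) * (e+2) = (e+2)*k + (e+2)*Dn := by ring
  have h2 : (e+2)*(k+Dn) = (e+2)*k + (e+2)*Dn := by ring
  omega

theorem RSg_length (e k Dn y : ℕ) (hy : y ≤ (e+2)*Dn) :
    (RSg e k Dn y).length = (e+2)*k + y := by
  simp [RSg]
  have h1 : (k+Dn) * (e+2) = (e+2)*k + (e+2)*Dn := by ring
  omega

theorem stg_length (e k Dn x y : ℕ) (qq : List Bool) (hx : x ≤ (e+2)*Dn) (hy : y ≤ (e+2)*Dn) :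
    (stg e k Dn qq x y).length = ((e+2)*k + x) + qq.length + ((e+2)*k + y) := by
  simp [stg, LSg_length e k Dn x hx, RSg_length e k Dn y hy]; omega

theorem repL_split (w : List Bool) (k Dn : ℕ) :
    repL w (k+Dn) = repL w k ++ repL w Dn :=
  repL_add w k Dn

theorem repL_split' (w : List Bool) (k Dn : ℕ) :
    repL w (k+Dn) = repL w Dn ++ repL w k := by
  rw [show k + Dn = Dn + k from by omega]; exact repL_add w Dn k

theorem LSg_split (e k Dn x : ℕ) (hx : x ≤ (e+2)*Dn) :
    LSg e k Dn x = (repL (pw e) Dn).drop ((e+2)*Dn - x) ++ repL (pw e) k := by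
  rw [LSg, repL_split']
  have h2 : (e+2)*(k+Dn) - ((e+2)*k + x) = (e+2)*Dn - x := by
    have : (e+2)*(k+Dn) = (e+2)*k + (e+2)*Dn := by ring
    omega
  rw [h2]
  rw [List.drop_append_of_le_length (by simp; rw [Nat.mul_comm]; omega)]

theorem RSg_split (e k Dn y : ℕ) (hy : y ≤ (e+2)*Dn) :
    RSg e k Dn y = repL (rc (pw e)) k ++ (repL (rc (pw e)) Dn).take y := by
  rw [RSg, repL_split, List.take_add]
  congr 1
  · rw [List.take_append_of_le_length (by simp; exact le_of_eq (by ring))]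
    apply List.take_of_length_le
    simp; exact le_of_eq (by ring)
  · rw [show (e+2)*k = (repL (rc (pw e)) k).length from by simp [Nat.mul_comm]]
    rw [List.drop_left]

theorem stg_zero (e k Dn : ℕ) (qq : List Bool) :
    stg e k Dn qq 0 0 = repL (pw e) k ++ qq ++ repL (rc (pw e)) k := by
  rw [stg, LSg_split e k Dn 0 (by omega), RSg_split e k Dn 0 (by omega)]
  simp
  exact le_of_eq (by ring)

theorem take_drop_assoc (n : ℕ) (l r : List Bool) :
    l.take n ++ (l.drop n ++ r) = l ++ r := by
  rw [← List.append_assoc, List.take_append_drop]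

theorem Xag_decomp (e k Dn x y : ℕ) (qq : List Bool) (hx : x ≤ (e+2)*Dn) (hy : y ≤ (e+2)*Dn) :
    Xag e k Dn qq = (repL (pw e) Dn).take ((e+2)*Dn - x) ++ stg e k Dn qq x y
      ++ (repL (rc (pw e)) Dn).drop y := by
  rw [Xag, stg, LSg_split e k Dn x hx, RSg_split e k Dn y hy]
  conv_lhs => rw [repL_split' (pw e) k Dn, repL_split (rc (pw e)) k Dn]
  simp only [List.append_assoc]
  rw [take_drop_assoc, List.take_append_drop]

theorem stg_rc (e k Dn x y : ℕ) (qq : List Bool) (hx : x ≤ (e+2)*Dn) (hy : y ≤ (e+2)*Dn) :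
    rc (stg e k Dn qq x y) = stg e k Dn (rc qq) y x := by
  have hcomm : (k+Dn) * (e+2) = (e+2)*k + (e+2)*Dn := by ring
  have hcomm2 : (e+2)*(k+Dn) = (e+2)*k + (e+2)*Dn := by ring
  rw [stg, stg, rc_append, rc_append]
  have h1 : rc (RSg e k Dn y) = LSg e k Dn y := by
    rw [RSg, LSg, rc_take _ _ (by simp; omega), rc_repL]
    simp only [rc_rc]
    congr 1
    simp
    omega
  have h2 : rc (LSg e k Dn x) = RSg e k Dn x := by
    rw [RSg, LSg, rc_drop _ _ (by simp; omega), rc_repL]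
    congr 1
    simp
    omega
  rw [h1, h2, List.append_assoc]

theorem stg_getD_left (e k Dn x y i : ℕ) (qq : List Bool) (hx : x ≤ (e+2)*Dn)
    (hi : i < (e+2)*k + x) :
    (stg e k Dn qq x y).getD i false = decide (((e+2)*Dn - x + i) % (e+2) = 1) := by
  have hcomm2 : (e+2)*(k+Dn) = (e+2)*k + (e+2)*Dn := by ring
  rw [stg]
  rw [List.getD_append _ _ _ _ (by simp [LSg_length e k Dn x hx]; omega)]
  rw [List.getD_append _ _ _ _ (by rw [LSg_length e k Dn x hx]; exact hi)]
  rw [LSg, getD_drop]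
  rw [left_getD e (k+Dn) _ (by omega)]
  have harg : (e+2)*(k+Dn) - ((e+2)*k + x) + i = (e+2)*Dn - x + i := by omega
  rw [harg]

theorem stg_getD_q (e k Dn x y m : ℕ) (qq : List Bool) (hx : x ≤ (e+2)*Dn)
    (hm : m < qq.length) :
    (stg e k Dn qq x y).getD ((e+2)*k + x + m) false = qq.getD m false := by
  rw [stg]
  rw [List.getD_append _ _ _ _ (by simp [LSg_length e k Dn x hx]; omega)]
  rw [List.getD_append_right _ _ _ _ (by rw [LSg_length e k Dn x hx]; omega)]
  rw [LSg_length e k Dn x hx]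
  have : (e+2)*k + x + m - ((e+2)*k + x) = m := by omega
  rw [this]

theorem Mid_length (e k Dn y ℓ : ℕ) (hyl : y + ℓ ≤ (e+2)*Dn) :
    (((repL (rc (pw e)) (k+Dn)).drop ((e+2)*k + y)).take ℓ).length = ℓ := by
  simp
  have : (k+Dn) * (e+2) = (e+2)*k + (e+2)*Dn := by ring
  omega

theorem Mid_getD (e k Dn y ℓ j : ℕ) (hyl : y + ℓ ≤ (e+2)*Dn) (hj : j < ℓ) :
    (((repL (rc (pw e)) (k+Dn)).drop ((e+2)*k + y)).take ℓ).getD j false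
      = !decide (((e+2)*k + y + j) % (e+2) = e) := by
  have hcomm2 : (e+2)*(k+Dn) = (e+2)*k + (e+2)*Dn := by ring
  rw [getD_take _ _ _ hj, getD_drop]
  rw [right_getD e (k+Dn) _ (by omega)]

/-! ### the key lemma bounding one right-completion step -/

theorem keyRight (e k Dn x y ℓ : ℕ) (he : 3 ≤ e) (hk : 1 ≤ k)
    (qq : List Bool) (hq1 : qq.getD 1 false = true)
    (d : ℕ) (hd : d = 3 ∨ d = 4) (hqd : qq.getD d false = true)
    (hx : x ≤ (e+2)*Dn) (hyl : y + ℓ ≤ (e+2)*Dn) (hl : 1 ≤ ℓ)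
    (heq : (stg e k Dn qq x y).take ℓ
      = rc (((repL (rc (pw e)) (k+Dn)).drop ((e+2)*k + y)).take ℓ)) :
    y + ℓ ≤ x + (e+2)*k + (e+2)*((y+4)/(e+2)) := by
  have hP : 5 ≤ e + 2 := by omega
  have hK : e + 2 ≤ (e+2)*k := by
    calc e + 2 = (e+2)*1 := by ring
    _ ≤ (e+2)*k := Nat.mul_le_mul_left _ hk
  -- the pointwise matching condition
  have E : ∀ i, i < ℓ → (stg e k Dn qq x y).getD i false
      = decide (((e+2)*k + y + (ℓ - 1 - i)) % (e+2) = e) := by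
    intro i hi
    have h1 : ((stg e k Dn qq x y).take ℓ).getD i false
        = (stg e k Dn qq x y).getD i false := getD_take _ _ _ hi
    rw [← h1, heq]
    rw [rc_getD _ _ (by rw [Mid_length e k Dn y ℓ hyl]; exact hi)]
    rw [Mid_length e k Dn y ℓ hyl]
    rw [Mid_getD e k Dn y ℓ _ hyl (by omega)]
    simp
  -- Step 1 : ℓ ≤ (e+2)*k + x + d
  have hld : ℓ ≤ (e+2)*k + x + d := by
    by_contra hcon
    push_neg at hcon
    have h1q : 1 < qq.length := getD_true_lt qq 1 hq1
    have hdq : d < qq.length := getD_true_lt qq d hqd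
    have e1 := E ((e+2)*k + x + 1) (by omega)
    have e2 := E ((e+2)*k + x + d) (by omega)
    rw [stg_getD_q e k Dn x y 1 qq hx h1q, hq1] at e1
    rw [stg_getD_q e k Dn x y d qq hx hdq, hqd] at e2
    have m1 : ((e+2)*k + y + (ℓ - 1 - ((e+2)*k + x + 1))) % (e+2) = e := by
      simpa using e1.symm
    have m2 : ((e+2)*k + y + (ℓ - 1 - ((e+2)*k + x + d))) % (e+2) = e := by
      simpa using e2.symm
    set A := (e+2)*k + y + (ℓ - 1 - ((e+2)*k + x + d)) with hA
    have hsum : (e+2)*k + y + (ℓ - 1 - ((e+2)*k + x + 1)) = A + (d - 1) := by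
      rw [hA]; omega
    rw [hsum] at m1
    have hmeq : A % (e+2) = (A + (d-1)) % (e+2) := by rw [m1, m2]
    have hdvd : (e+2) ∣ (A + (d-1)) - A := (Nat.modEq_iff_dvd' (by omega)).mp hmeq
    have : (A + (d-1)) - A = d - 1 := by omega
    rw [this] at hdvd
    have := Nat.le_of_dvd (by omega) hdvd
    omega
  -- the left-run character at position r := (x+1) % (e+2)
  obtain ⟨t, r, ht, hr⟩ : ∃ t r, (e+2)*t + r = x + 1 ∧ r < e + 2 :=
    ⟨(x+1)/(e+2), (x+1) % (e+2), Nat.div_add_mod _ _, Nat.mod_lt _ (by omega)⟩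
  have hxr : ((e+2)*Dn - x + r) % (e+2) = 1 := by
    have h5 : (e+2)*t < (e+2)*(Dn+1) := by
      have hexp : (e+2)*(Dn+1) = (e+2)*Dn + (e+2) := by ring
      omega
    have htd : t ≤ Dn := by
      have := Nat.lt_of_mul_lt_mul_left h5
      omega
    have h6 : (e+2)*(Dn - t) + (e+2)*t = (e+2)*Dn := by
      rw [← Nat.mul_add]; congr 1; omega
    have harg : (e+2)*Dn - x + r = (e+2)*(Dn - t) + 1 := by omega
    rw [harg, Nat.mul_add_mod]
    exact Nat.mod_eq_of_lt (by omega)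
  have hstgr : (stg e k Dn qq x y).getD r false = true := by
    rw [stg_getD_left e k Dn x y r qq hx (by omega), hxr]
    simp
  by_cases hcase : r < ℓ
  · -- the congruence case : y + ℓ ≡ x  mod (e+2)
    have h2 := E r hcase
    rw [hstgr] at h2
    have hBmod : ((e+2)*k + y + (ℓ - 1 - r)) % (e+2) = e := by simpa using h2.symm
    set B := (e+2)*k + y + (ℓ - 1 - r) with hBdef
    have hB2 : (B + 2) % (e+2) = 0 := by
      have h := Nat.add_mod B 2 (e+2)
      rw [hBmod] at h
      have h2lt : 2 % (e+2) = 2 := Nat.mod_eq_of_lt (by omega)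
      rw [h2lt] at h
      rw [h, Nat.mod_self]
    obtain ⟨s, hs⟩ := Nat.dvd_of_mod_eq_zero hB2
    rcases le_or_gt (y + ℓ) x with hyx | hyx
    · omega
    · have hexp1 : (e+2)*(k+t) = (e+2)*k + (e+2)*t := by ring
      have hslt : k + t < s := by
        have h7 : (e+2)*(k+t) < (e+2)*s := by omega
        exact Nat.lt_of_mul_lt_mul_left h7
      set w := s - k - t with hwdef
      have hww : (e+2)*w + ((e+2)*k + (e+2)*t) = (e+2)*s := by
        rw [← Nat.mul_add, ← Nat.mul_add]; congr 1; omega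
      have hd4 : d ≤ 4 := by rcases hd with h | h <;> omega
      have hsB : B + 2 = (e+2)*s := hs
      have hBval : B = (e+2)*k + y + (ℓ - 1 - r) := hBdef
      have hb : (e+2)*w ≤ (e+2)*k + y + 4 := by omega
      have hcommw : w * (e+2) = (e+2)*w := by ring
      have hdivle : w ≤ k + (y+4)/(e+2) := by
        have h8 : w ≤ ((e+2)*k + (y+4))/(e+2) := by
          rw [Nat.le_div_iff_mul_le (by omega)]
          omega
        rwa [Nat.mul_add_div (by omega)] at h8
      have h9 : (e+2)*w ≤ (e+2)*(k + (y+4)/(e+2)) := Nat.mul_le_mul_left _ hdivle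
      have hexp2 : (e+2)*(k + (y+4)/(e+2)) = (e+2)*k + (e+2)*((y+4)/(e+2)) := by ring
      omega
  · -- ℓ ≤ r : small ragged step
    push_neg at hcase
    obtain ⟨s2, r2, hrel2, hr2⟩ : ∃ s2 r2, (e+2)*s2 + r2 = y + ℓ + 1 ∧ r2 < e + 2 :=
      ⟨(y+ℓ+1)/(e+2), (y+ℓ+1) % (e+2), Nat.div_add_mod _ _, Nat.mod_lt _ (by omega)⟩
    by_cases hc2 : r2 < ℓ
    · exfalso
      have h2 := E r2 hc2
      have hCmod : ((e+2)*k + y + (ℓ - 1 - r2)) % (e+2) = e := by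
        have hexp : (e+2)*(k+s2) = (e+2)*k + (e+2)*s2 := by ring
        have hrel : (e+2)*s2 + r2 = y + ℓ + 1 := hrel2
        have hC' : (e+2)*k + y + (ℓ - 1 - r2) + 2 = (e+2)*(k+s2) := by omega
        have hC : (e+2)*k + y + (ℓ - 1 - r2) = (e+2)*(k+s2) - 2 := by omega
        have hpos : 1 ≤ k + s2 := by omega
        have hC2 : (e+2)*(k+s2) - 2 = (e+2)*(k+s2-1) + e := by
          have hexp2 : (e+2)*(k+s2-1+1) = (e+2)*(k+s2-1) + (e+2) := by ring
          have hexp3 : (e+2)*(k+s2) = (e+2)*(k+s2-1) + (e+2) := by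
            rw [← hexp2]; congr 1; omega
          omega
        rw [hC, hC2, Nat.mul_add_mod]
        exact Nat.mod_eq_of_lt (by omega)
      have h2' : (stg e k Dn qq x y).getD r2 false = true := by
        rw [h2, hCmod]; simp
      rw [stg_getD_left e k Dn x y r2 qq hx (by omega)] at h2'
      have hx2 : ((e+2)*Dn - x + r2) % (e+2) = 1 := by simpa using h2'
      -- now r = r2, contradiction with r2 < ℓ ≤ r
      have heqmod : ((e+2)*Dn - x + r) % (e+2) = ((e+2)*Dn - x + r2) % (e+2) := by
        rw [hxr, hx2]
      rcases le_total r r2 with hle | hle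
      · have hdvd := (Nat.modEq_iff_dvd' (by omega)).mp heqmod
        have : (e+2)*Dn - x + r2 - ((e+2)*Dn - x + r) = r2 - r := by omega
        rw [this] at hdvd
        rcases Nat.eq_zero_or_pos (r2 - r) with h0 | h0
        · omega
        · have := Nat.le_of_dvd h0 hdvd; omega
      · have hdvd := (Nat.modEq_iff_dvd' (by omega)).mp heqmod.symm
        have : (e+2)*Dn - x + r - ((e+2)*Dn - x + r2) = r - r2 := by omega
        rw [this] at hdvd
        rcases Nat.eq_zero_or_pos (r - r2) with h0 | h0
        · omega
        · have := Nat.le_of_dvd h0 hdvd; omega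
    · -- ℓ ≤ r2 : tiny step, bound holds outright
      push_neg at hc2
      have hs2y : (e+2)*s2 ≤ y + 1 := by omega
      have hcomms2 : s2 * (e+2) = (e+2)*s2 := by ring
      have hsdiv : s2 ≤ (y+4)/(e+2) := by
        rw [Nat.le_div_iff_mul_le (by omega)]
        omega
      have hGs : (e+2)*s2 ≤ (e+2)*((y+4)/(e+2)) := Nat.mul_le_mul_left _ hsdiv
      omega

/-! ### uniqueness of the occurrence of X_k inside X_a -/

theorem Xag_eq_stg (e K : ℕ) (qq : List Bool) :
    Xag e K 0 qq = stg e K 0 qq 0 0 := by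
  rw [stg_zero, Xag]
  simp [repL]

theorem Xag_eq_stg' (e k Dn : ℕ) (qq : List Bool) :
    Xag e k Dn qq = stg e (k+Dn) 0 qq 0 0 := by
  rw [stg_zero, Xag]

theorem Xag_getD_left (e K i : ℕ) (qq : List Bool) (hi : i < (e+2)*K) :
    (Xag e K 0 qq).getD i false = decide (i % (e+2) = 1) := by
  rw [Xag_eq_stg, stg_getD_left e K 0 0 0 i qq (by omega) (by omega)]
  rw [show (e+2)*0 - 0 + i = i from by omega]

theorem Xag_getD_q (e K m : ℕ) (qq : List Bool) (hm : m < qq.length) :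
    (Xag e K 0 qq).getD ((e+2)*K + m) false = qq.getD m false := by
  rw [Xag_eq_stg]
  have := stg_getD_q e K 0 0 0 m qq (by omega) hm
  simpa using this

theorem occ_left (e k Dn : ℕ) (he : 3 ≤ e) (hk : 1 ≤ k) (qq : List Bool)
    (h11 : ∃ f, qq.getD f false = true ∧ qq.getD (f+1) false = true)
    (A B : List Bool)
    (h : Xag e k Dn qq = A ++ (repL (pw e) k ++ qq ++ repL (rc (pw e)) k) ++ B) :
    (e+2)*Dn ≤ A.length := by
  classical
  set f := Nat.find h11 with hfdef
  obtain ⟨hf1, hf2⟩ := Nat.find_spec h11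
  have hflen : f + 1 < qq.length := getD_true_lt qq (f+1) hf2
  -- X_a as a "full state" over K := k + Dn
  have hXa : Xag e k Dn qq = Xag e (k+Dn) 0 qq := by rw [Xag, Xag]; simp [repL]
  -- characters at the occurrence
  have hXk : repL (pw e) k ++ qq ++ repL (rc (pw e)) k = Xag e k 0 qq := by
    rw [Xag]; simp [repL]
  have hgetmid : ∀ j, j < (Xag e k 0 qq).length →
      (Xag e k Dn qq).getD (A.length + j) false = (Xag e k 0 qq).getD j false := by
    intro j hj
    rw [h, hXk]
    rw [List.getD_append _ _ _ _ (by simp; omega)]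
    rw [List.getD_append_right _ _ _ _ (by omega)]
    congr 1
    omega
  have hq1 : (Xag e k Dn qq).getD (A.length + ((e+2)*k + f)) false = true := by
    rw [hgetmid _ (by simp [Xag]; rw [Nat.mul_comm]; omega)]
    rw [Xag_getD_q e k f qq (by omega)]
    exact hf1
  have hq2 : (Xag e k Dn qq).getD (A.length + ((e+2)*k + f) + 1) false = true := by
    have : A.length + ((e+2)*k + f) + 1 = A.length + ((e+2)*k + (f+1)) := by omega
    rw [this, hgetmid _ (by simp [Xag]; rw [Nat.mul_comm]; omega)]
    rw [show (e+2)*k + (f+1) = (e+2)*k + (f+1) from rfl, Xag_getD_q e k (f+1) qq hflen]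
    exact hf2
  -- no "11" strictly before position (e+2)*(k+Dn) + f
  by_contra hcon
  push_neg at hcon
  set i := A.length + ((e+2)*k + f) with hidef
  have hilt : i < (e+2)*(k+Dn) + f := by
    have : (e+2)*(k+Dn) = (e+2)*k + (e+2)*Dn := by ring
    omega
  rcases lt_trichotomy (i+1) ((e+2)*(k+Dn)) with hc | hc | hc
  · rw [hXa] at hq1 hq2
    rw [Xag_getD_left e (k+Dn) i qq (by omega)] at hq1
    rw [Xag_getD_left e (k+Dn) (i+1) qq (by omega)] at hq2
    have m1 : i % (e+2) = 1 := by simpa using hq1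
    have m2 : (i+1) % (e+2) = 1 := by simpa using hq2
    have hdvd := (Nat.modEq_iff_dvd' (by omega)).mp (m1.trans m2.symm)
    have : i + 1 - i = 1 := by omega
    rw [this] at hdvd
    have := Nat.le_of_dvd (by omega) hdvd
    omega
  · -- i + 1 = (e+2)*(k+Dn) : the char at i is the last char of per^a, which is 0
    rw [hXa] at hq1
    rw [Xag_getD_left e (k+Dn) i qq (by omega)] at hq1
    have m1 : i % (e+2) = 1 := by simpa using hq1
    have hkd : 1 ≤ k + Dn := by omega
    have hexp : (e+2)*(k+Dn) = (e+2)*(k+Dn-1) + (e+1) + 1 := by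
      have : (e+2)*(k+Dn-1+1) = (e+2)*(k+Dn-1) + (e+2) := by ring
      have h2 : (e+2)*(k+Dn) = (e+2)*(k+Dn-1) + (e+2) := by
        rw [← this]; congr 1; omega
      omega
    have : i = (e+2)*(k+Dn-1) + (e+1) := by omega
    rw [this, Nat.mul_add_mod] at m1
    rw [Nat.mod_eq_of_lt (by omega)] at m1
    omega
  · -- i in the qq region : contradicts minimality of f
    set g := i - (e+2)*(k+Dn) with hgdef
    have hglt : g < f := by omega
    have hi2 : i = (e+2)*(k+Dn) + g := by omega
    rw [hXa] at hq1 hq2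
    rw [hi2] at hq1
    rw [show i + 1 = (e+2)*(k+Dn) + (g+1) from by omega] at hq2
    rw [Xag_getD_q e (k+Dn) g qq (by omega)] at hq1
    rw [Xag_getD_q e (k+Dn) (g+1) qq (by omega)] at hq2
    exact Nat.find_min h11 hglt ⟨hq1, hq2⟩

theorem occ (e k Dn : ℕ) (he : 3 ≤ e) (hk : 1 ≤ k) (qq : List Bool)
    (h11 : ∃ f, qq.getD f false = true ∧ qq.getD (f+1) false = true)
    (h11' : ∃ f, (rc qq).getD f false = true ∧ (rc qq).getD (f+1) false = true)
    (A B : List Bool)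
    (h : Xag e k Dn qq = A ++ (repL (pw e) k ++ qq ++ repL (rc (pw e)) k) ++ B) :
    A.length = (e+2)*Dn ∧ B.length = (e+2)*Dn := by
  have hA := occ_left e k Dn he hk qq h11 A B h
  -- mirrored occurrence
  have hrc : Xag e k Dn (rc qq) = rc B ++ (repL (pw e) k ++ rc qq ++ repL (rc (pw e)) k) ++ rc A := by
    have h1 : rc (Xag e k Dn qq) = Xag e k Dn (rc qq) := by
      rw [Xag_eq_stg' e k Dn qq, Xag_eq_stg' e k Dn (rc qq)]
      rw [stg_rc e (k+Dn) 0 0 0 qq (by omega) (by omega)]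
    have h2 : rc (repL (pw e) k ++ qq ++ repL (rc (pw e)) k)
        = repL (pw e) k ++ rc qq ++ repL (rc (pw e)) k := by
      rw [show repL (pw e) k ++ qq ++ repL (rc (pw e)) k = stg e k 0 qq 0 0 from (stg_zero e k 0 qq).symm]
      rw [stg_rc e k 0 0 0 qq (by omega) (by omega), stg_zero]
    rw [← h1, h, rc_append, rc_append, h2]
    simp [List.append_assoc]
  have hB := occ_left e k Dn he hk (rc qq) h11' (rc B) (rc A) hrc
  have hlen := congrArg List.length h
  simp [Xag] at hlen
  rw [rc_length] at hB
  constructor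
  · have hc1 : (k+Dn) * (e+2) = k * (e+2) + (e+2) * Dn := by ring
    have hc2 : k * (e+2) = (e+2) * k := by ring
    omega
  · have hc1 : (k+Dn) * (e+2) = k * (e+2) + (e+2) * Dn := by ring
    have hc2 : k * (e+2) = (e+2) * k := by ring
    omega

/-! ### locating factor states and the two step lemmas -/

theorem rc_Xag (e k Dn : ℕ) (qq : List Bool) :
    rc (Xag e k Dn qq) = Xag e k Dn (rc qq) := by
  rw [Xag_eq_stg' e k Dn qq, Xag_eq_stg' e k Dn (rc qq)]
  rw [stg_rc e (k+Dn) 0 0 0 qq (by omega) (by omega)]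

theorem RSg_add (e k Dn y ℓ : ℕ) :
    RSg e k Dn (y+ℓ) = RSg e k Dn y ++ ((repL (rc (pw e)) (k+Dn)).drop ((e+2)*k + y)).take ℓ := by
  rw [RSg, RSg, show (e+2)*k + (y+ℓ) = ((e+2)*k + y) + ℓ from by omega, List.take_add]

theorem stg_add (e k Dn x y ℓ : ℕ) (qq : List Bool) :
    stg e k Dn qq x (y+ℓ)
      = stg e k Dn qq x y ++ ((repL (rc (pw e)) (k+Dn)).drop ((e+2)*k + y)).take ℓ := by
  rw [stg, stg, RSg_add e k Dn y ℓ]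
  simp [List.append_assoc]

theorem state_interval (e k Dn x y : ℕ) (he : 3 ≤ e) (hk : 1 ≤ k) (qq : List Bool)
    (h11 : ∃ f, qq.getD f false = true ∧ qq.getD (f+1) false = true)
    (h11' : ∃ f, (rc qq).getD f false = true ∧ (rc qq).getD (f+1) false = true)
    (hx : x ≤ (e+2)*Dn) (hy : y ≤ (e+2)*Dn) (A B : List Bool)
    (hS : Xag e k Dn qq = A ++ stg e k Dn qq x y ++ B) :
    A.length = (e+2)*Dn - x ∧ B.length = (e+2)*Dn - y := by
  have h2 : Xag e k Dn qq = (A ++ (repL (pw e) Dn).drop ((e+2)*Dn - x))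
      ++ (repL (pw e) k ++ qq ++ repL (rc (pw e)) k)
      ++ ((repL (rc (pw e)) Dn).take y ++ B) := by
    rw [hS, stg, LSg_split e k Dn x hx, RSg_split e k Dn y hy]
    simp [List.append_assoc]
  obtain ⟨hA, hB⟩ := occ e k Dn he hk qq h11 h11' _ _ h2
  simp at hA hB
  have hc : Dn * (e+2) = (e+2) * Dn := by ring
  constructor <;> omega

theorem stepRight (e k Dn x y ℓ : ℕ) (he : 3 ≤ e) (hk : 1 ≤ k) (qq : List Bool)
    (hq1 : qq.getD 1 false = true) (d : ℕ) (hd : d = 3 ∨ d = 4) (hqd : qq.getD d false = true)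
    (h11 : ∃ f, qq.getD f false = true ∧ qq.getD (f+1) false = true)
    (h11' : ∃ f, (rc qq).getD f false = true ∧ (rc qq).getD (f+1) false = true)
    (hx : x ≤ (e+2)*Dn) (hy : y ≤ (e+2)*Dn) (hl : 1 ≤ ℓ)
    (hlU : ℓ ≤ (stg e k Dn qq x y).length)
    (S : List Bool) (hS : S = stg e k Dn qq x y ++ rc ((stg e k Dn qq x y).take ℓ))
    (hfac : ∃ A B, Xag e k Dn qq = A ++ S ++ B) :
    y + ℓ ≤ (e+2)*Dn ∧ S = stg e k Dn qq x (y+ℓ)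
      ∧ y + ℓ ≤ x + (e+2)*k + (e+2)*((y+4)/(e+2)) := by
  obtain ⟨A, B, hAB⟩ := hfac
  have hAB2 : Xag e k Dn qq = A ++ stg e k Dn qq x y
      ++ (rc ((stg e k Dn qq x y).take ℓ) ++ B) := by
    rw [hAB, hS]; simp [List.append_assoc]
  obtain ⟨hAlen, hBlen⟩ := state_interval e k Dn x y he hk qq h11 h11' hx hy _ _ hAB2
  have htklen : ((stg e k Dn qq x y).take ℓ).length = ℓ := by
    rw [List.length_take]; omega
  have hBlen2 : (rc ((stg e k Dn qq x y).take ℓ) ++ B).length = ℓ + B.length := by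
    simp [htklen]
  have hyl : y + ℓ ≤ (e+2)*Dn := by
    rw [hBlen2] at hBlen; omega
  -- identify S with the canonical state (x, y+ℓ)
  have e2 : Xag e k Dn qq = (repL (pw e) Dn).take ((e+2)*Dn - x)
      ++ stg e k Dn qq x (y+ℓ) ++ (repL (rc (pw e)) Dn).drop (y+ℓ) :=
    Xag_decomp e k Dn x (y+ℓ) qq hx hyl
  have e3 : A ++ (S ++ B) = (repL (pw e) Dn).take ((e+2)*Dn - x)
      ++ (stg e k Dn qq x (y+ℓ) ++ (repL (rc (pw e)) Dn).drop (y+ℓ)) := by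
    rw [← List.append_assoc, ← hAB, e2]
    simp [List.append_assoc]
  have hlenA : A.length = ((repL (pw e) Dn).take ((e+2)*Dn - x)).length := by
    rw [List.length_take, hAlen]
    simp
    have hc : Dn * (e+2) = (e+2) * Dn := by ring
    omega
  obtain ⟨-, e4⟩ := List.append_inj e3 hlenA
  have hlenS : S.length = (stg e k Dn qq x (y+ℓ)).length := by
    rw [hS, stg_length e k Dn x (y+ℓ) qq hx hyl]
    simp [htklen, stg_length e k Dn x y qq hx hy]
    omega
  obtain ⟨hSeq, -⟩ := List.append_inj e4 hlenS
  refine ⟨hyl, hSeq, ?_⟩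
  -- derive the take/rc equation and apply the key lemma
  have h5 : stg e k Dn qq x y ++ rc ((stg e k Dn qq x y).take ℓ)
      = stg e k Dn qq x y ++ ((repL (rc (pw e)) (k+Dn)).drop ((e+2)*k + y)).take ℓ := by
    rw [← hS, hSeq, stg_add e k Dn x y ℓ qq]
  have h6 := List.append_cancel_left h5
  have h7 : (stg e k Dn qq x y).take ℓ
      = rc (((repL (rc (pw e)) (k+Dn)).drop ((e+2)*k + y)).take ℓ) := by
    rw [← h6, rc_rc]
  exact keyRight e k Dn x y ℓ he hk qq hq1 d hd hqd hx hyl hl h7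

theorem stepLeft (e k Dn x y ℓ : ℕ) (he : 3 ≤ e) (hk : 1 ≤ k) (qq : List Bool)
    (hq1 : (rc qq).getD 1 false = true) (d : ℕ) (hd : d = 3 ∨ d = 4)
    (hqd : (rc qq).getD d false = true)
    (h11 : ∃ f, qq.getD f false = true ∧ qq.getD (f+1) false = true)
    (h11' : ∃ f, (rc qq).getD f false = true ∧ (rc qq).getD (f+1) false = true)
    (hx : x ≤ (e+2)*Dn) (hy : y ≤ (e+2)*Dn) (hl : 1 ≤ ℓ)
    (hlU : ℓ ≤ (stg e k Dn qq x y).length)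
    (S : List Bool)
    (hS : S = rc ((stg e k Dn qq x y).drop ((stg e k Dn qq x y).length - ℓ))
      ++ stg e k Dn qq x y)
    (hfac : ∃ A B, Xag e k Dn qq = A ++ S ++ B) :
    x + ℓ ≤ (e+2)*Dn ∧ S = stg e k Dn qq (x+ℓ) y
      ∧ x + ℓ ≤ y + (e+2)*k + (e+2)*((x+4)/(e+2)) := by
  have hU : rc (stg e k Dn qq x y) = stg e k Dn (rc qq) y x :=
    stg_rc e k Dn x y qq hx hy
  have hrcS : rc S = stg e k Dn (rc qq) y x ++ rc ((stg e k Dn (rc qq) y x).take ℓ) := by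
    rw [hS, rc_append, rc_rc, hU]
    congr 1
    rw [← hU, rc_take _ _ (by rw [rc_length]; exact hlU), rc_rc, rc_length]
  have hfac' : ∃ A B, Xag e k Dn (rc qq) = A ++ rc S ++ B := by
    obtain ⟨A, B, hAB⟩ := hfac
    refine ⟨rc B, rc A, ?_⟩
    rw [← rc_Xag, hAB, rc_append, rc_append]
    simp [List.append_assoc]
  have h11'' : ∃ f, (rc (rc qq)).getD f false = true ∧ (rc (rc qq)).getD (f+1) false = true := by
    rw [rc_rc]; exact h11
  obtain ⟨hxl, hSeq, hbound⟩ := stepRight e k Dn y x ℓ he hk (rc qq) hq1 d hd hqd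
    h11' h11'' hy hx hl (by rw [← hU, rc_length]; exact hlU) (rc S) hrcS hfac'
  refine ⟨hxl, ?_, hbound⟩
  have := congrArg rc hSeq
  rw [rc_rc] at this
  rw [this, stg_rc e k Dn y (x+ℓ) (rc qq) hy hxl, rc_rc]

/-! ### the lower bound -/

theorem hcompN_snoc (m : ℕ) (S U T : List Bool) (h1 : HCompN m S U) (h2 : HComp U T) :
    HCompN (m+1) S T := by
  induction m generalizing S with
  | zero =>
    simp only [HCompN] at h1 ⊢
    exact ⟨T, h1 ▸ h2, rfl⟩
  | succ m ih =>
    obtain ⟨V, hSV, hVU⟩ := h1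
    exact ⟨V, hSV, ih V hVU⟩

theorem hcompN_last (m : ℕ) (S T : List Bool) (h : HCompN (m+1) S T) :
    ∃ U, HCompN m S U ∧ HComp U T := by
  induction m generalizing S with
  | zero =>
    obtain ⟨V, hSV, hVT⟩ := h
    simp only [HCompN] at hVT
    exact ⟨S, rfl, hVT ▸ hSV⟩
  | succ m ih =>
    obtain ⟨V, hSV, hVT⟩ := h
    obtain ⟨U, hVU, hUT⟩ := ih V hVT
    exact ⟨U, ⟨V, hSV, hVU⟩, hUT⟩

theorem lower (e k Dn : ℕ) (he : 3 ≤ e) (hk : 1 ≤ k) (qq : List Bool)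
    (hq1 : qq.getD 1 false = true) (hq3 : qq.getD 3 false = true)
    (hq1' : (rc qq).getD 1 false = true) (hq4' : (rc qq).getD 4 false = true)
    (h11 : ∃ f, qq.getD f false = true ∧ qq.getD (f+1) false = true)
    (h11' : ∃ f, (rc qq).getD f false = true ∧ (rc qq).getD (f+1) false = true)
    (m : ℕ) :
    ∀ S, HCompN m (stg e k Dn qq 0 0) S → (∃ A B, Xag e k Dn qq = A ++ S ++ B) →
    ∃ x y, x ≤ (e+2)*Dn ∧ y ≤ (e+2)*Dn ∧ S = stg e k Dn qq x y ∧
      ((x+4)/(e+2) + k ≤ Fib m * k ∨ (y+4)/(e+2) + k ≤ Fib m * k) ∧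
      (x+4)/(e+2) + k ≤ Fib (m+1) * k ∧ (y+4)/(e+2) + k ≤ Fib (m+1) * k := by
  induction m with
  | zero =>
    intro S h0 hfac
    simp only [HCompN] at h0
    have h4 : (0+4)/(e+2) = 0 := Nat.div_eq_of_lt (by omega)
    refine ⟨0, 0, by omega, by omega, h0.symm, ?_, ?_, ?_⟩ <;> simp only [Fib, h4] <;> omega
  | succ m ih =>
    intro S hN hfac
    obtain ⟨U, hU, hcomp⟩ := hcompN_last m _ S hN
    obtain ⟨ℓ, hl1, hl2, hcase⟩ := hcomp
    have hFib : Fib (m+2) = Fib (m+1) + Fib m := rfl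
    have hFibk : Fib (m+1+1) * k = Fib (m+1) * k + Fib m * k := by
      rw [show m+1+1 = m+2 from rfl, hFib, add_mul]
    rcases hcase with hR | hL
    · have hfacU : ∃ A B, Xag e k Dn qq = A ++ U ++ B := by
        obtain ⟨A, B, hAB⟩ := hfac
        exact ⟨A, rc (U.take ℓ) ++ B, by rw [hAB, hR]; simp [List.append_assoc]⟩
      obtain ⟨x, y, hx, hy, hUeq, hC, hA, hB⟩ := ih U hU hfacU
      rw [hUeq] at hR hl2
      obtain ⟨hyl, hSeq, hbd⟩ := stepRight e k Dn x y ℓ he hk qq hq1 3 (Or.inl rfl) hq3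
        h11 h11' hx hy hl1 hl2 S hR hfac
      have hexp : (e+2)*(k + (y+4)/(e+2)) = (e+2)*k + (e+2)*((y+4)/(e+2)) := by ring
      have h1 : y + ℓ + 4 ≤ x + 4 + (e+2)*(k + (y+4)/(e+2)) := by omega
      have h2 := Nat.div_le_div_right (c := e+2) h1
      rw [Nat.add_mul_div_left _ _ (show 0 < e+2 by omega)] at h2
      refine ⟨x, y+ℓ, hx, hyl, hSeq, ?_, ?_, ?_⟩ <;> rcases hC with hC | hC <;> omega
    · have hfacU : ∃ A B, Xag e k Dn qq = A ++ U ++ B := by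
        obtain ⟨A, B, hAB⟩ := hfac
        exact ⟨A ++ rc (U.drop (U.length - ℓ)), B, by rw [hAB, hL]; simp [List.append_assoc]⟩
      obtain ⟨x, y, hx, hy, hUeq, hC, hA, hB⟩ := ih U hU hfacU
      rw [hUeq] at hL hl2
      obtain ⟨hxl, hSeq, hbd⟩ := stepLeft e k Dn x y ℓ he hk qq hq1' 4 (Or.inr rfl) hq4'
        h11 h11' hx hy hl1 hl2 S hL hfac
      have hexp : (e+2)*(k + (x+4)/(e+2)) = (e+2)*k + (e+2)*((x+4)/(e+2)) := by ring
      have h1 : x + ℓ + 4 ≤ y + 4 + (e+2)*(k + (x+4)/(e+2)) := by omega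
      have h2 := Nat.div_le_div_right (c := e+2) h1
      rw [Nat.add_mul_div_left _ _ (show 0 < e+2 by omega)] at h2
      refine ⟨x+ℓ, y, hxl, hy, hSeq, ?_, ?_, ?_⟩ <;> rcases hC with hC | hC <;> omega

theorem lower_final (e k Dn : ℕ) (he : 3 ≤ e) (hk : 1 ≤ k) (qq : List Bool)
    (hq1 : qq.getD 1 false = true) (hq3 : qq.getD 3 false = true)
    (hq1' : (rc qq).getD 1 false = true) (hq4' : (rc qq).getD 4 false = true)
    (h11 : ∃ f, qq.getD f false = true ∧ qq.getD (f+1) false = true)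
    (h11' : ∃ f, (rc qq).getD f false = true ∧ (rc qq).getD (f+1) false = true)
    (m : ℕ) (h : HCompN m (stg e k Dn qq 0 0) (Xag e k Dn qq)) :
    k + Dn ≤ Fib m * k := by
  obtain ⟨x, y, hx, hy, hXeq, hC, hA, hB⟩ :=
    lower e k Dn he hk qq hq1 hq3 hq1' hq4' h11 h11' m (Xag e k Dn qq) h ⟨[], [], by simp⟩
  have hlen := congrArg List.length hXeq
  rw [stg_length e k Dn x y qq hx hy] at hlen
  simp [Xag] at hlen
  have hc1 : (k+Dn) * (e+2) = (e+2)*k + (e+2)*Dn := by ring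
  have hxy : x = (e+2)*Dn ∧ y = (e+2)*Dn := by omega
  obtain ⟨rfl, rfl⟩ := hxy
  have hdiv : ((e+2)*Dn + 4)/(e+2) = Dn := by
    rw [Nat.mul_add_div (by omega)]
    have : 4/(e+2) = 0 := Nat.div_eq_of_lt (by omega)
    omega
  rw [hdiv] at hC
  omega

/-! ### the upper bound : an explicit completion strategy -/

def Mq (e : ℕ) (qq : List Bool) (i j : ℕ) : List Bool :=
  repL (pw e) i ++ qq ++ repL (rc (pw e)) j

theorem stepSR (e : ℕ) (qq : List Bool) (i j t : ℕ) (ht1 : 1 ≤ t) (ht2 : t ≤ i) :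
    HComp (Mq e qq i j) (Mq e qq i (j+t)) := by
  refine ⟨t*(e+2), by simpa using Nat.mul_le_mul ht1 (show 1 ≤ e+2 by omega), ?_, Or.inl ?_⟩
  · simp [Mq]
    have h1 : t * (e+2) ≤ i * (e+2) := Nat.mul_le_mul_right _ ht2
    omega
  · have htake : (Mq e qq i j).take (t*(e+2)) = repL (pw e) t := by
      rw [Mq]
      rw [List.take_append_of_le_length (by simp; have := Nat.mul_le_mul_right (e+2) ht2; omega)]
      rw [List.take_append_of_le_length (by simp; have := Nat.mul_le_mul_right (e+2) ht2; omega)]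
      rw [show i = t + (i - t) from by omega, repL_add]
      rw [List.take_append_of_le_length (by simp)]
      apply List.take_of_length_le
      simp
    rw [htake, rc_repL, Mq, Mq, repL_add]
    simp [List.append_assoc]

theorem stepSL (e : ℕ) (qq : List Bool) (i j t : ℕ) (ht1 : 1 ≤ t) (ht2 : t ≤ j) :
    HComp (Mq e qq i j) (Mq e qq (i+t) j) := by
  refine ⟨t*(e+2), by simpa using Nat.mul_le_mul ht1 (show 1 ≤ e+2 by omega), ?_, Or.inr ?_⟩
  · simp [Mq]
    have h1 : t * (e+2) ≤ j * (e+2) := Nat.mul_le_mul_right _ ht2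
    omega
  · have hsplit : Mq e qq i j = (repL (pw e) i ++ qq ++ repL (rc (pw e)) (j-t))
        ++ repL (rc (pw e)) t := by
      rw [Mq, show j = (j - t) + t from by omega, repL_add]
      simp [List.append_assoc]
    have hlen : (Mq e qq i j).length - t*(e+2)
        = (repL (pw e) i ++ qq ++ repL (rc (pw e)) (j-t)).length := by
      rw [hsplit]
      simp
      omega
    have hdrop : (Mq e qq i j).drop ((Mq e qq i j).length - t*(e+2))
        = repL (rc (pw e)) t := by
      rw [hlen]
      conv_lhs => rw [hsplit]
      rw [List.drop_left]
    rw [hdrop, rc_repL]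
    simp only [rc_rc]
    rw [Mq, Mq, show i + t = t + i from by omega, repL_add]
    simp [List.append_assoc]

theorem grow (e k : ℕ) (qq : List Bool) (hk : 1 ≤ k) : ∀ m : ℕ,
    (m % 2 = 0 → HCompN m (Mq e qq k k) (Mq e qq (Fib (m+1) * k) (Fib m * k))) ∧
    (m % 2 = 1 → HCompN m (Mq e qq k k) (Mq e qq (Fib m * k) (Fib (m+1) * k))) := by
  intro m
  induction m with
  | zero =>
    constructor
    · intro _
      show Mq e qq k k = _
      simp [Fib]
    · omega
  | succ m ih =>
    have hFib : Fib (m+2) = Fib (m+1) + Fib m := rfl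
    have hp1 : 1 ≤ Fib (m+1) * k := Nat.one_le_iff_ne_zero.mpr
      (Nat.mul_ne_zero (by have := Fib_pos (m+1); omega) (by omega))
    constructor
    · -- m+1 even, so m odd
      intro hpar
      have hm : m % 2 = 1 := by omega
      have hbase := ih.2 hm
      have hstep := stepSL e qq (Fib m * k) (Fib (m+1) * k) (Fib (m+1) * k) hp1 le_rfl
      have : Fib m * k + Fib (m+1) * k = Fib (m+1+1) * k := by
        rw [show m+1+1 = m+2 from rfl, hFib, add_mul]; omega
      rw [this] at hstep
      exact hcompN_snoc m _ _ _ hbase hstep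
    · -- m+1 odd, so m even
      intro hpar
      have hm : m % 2 = 0 := by omega
      have hbase := ih.1 hm
      have hstep := stepSR e qq (Fib (m+1) * k) (Fib m * k) (Fib (m+1) * k) hp1 le_rfl
      have : Fib m * k + Fib (m+1) * k = Fib (m+1+1) * k := by
        rw [show m+1+1 = m+2 from rfl, hFib, add_mul]; omega
      rw [this] at hstep
      exact hcompN_snoc m _ _ _ hbase hstep

theorem upper (e k Dn : ℕ) (hk : 1 ≤ k) (qq : List Bool) (y₀ : ℕ)
    (h1 : k + Dn ≤ Fib y₀ * k) (h2 : ∀ m, m < y₀ → ¬ (k + Dn ≤ Fib m * k)) :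
    HCompN y₀ (Mq e qq k k) (Mq e qq (k+Dn) (k+Dn)) := by
  rcases Nat.eq_zero_or_pos Dn with hD0 | hD
  · have hy0 : y₀ = 0 := by
      by_contra hc
      exact h2 0 (by omega) (by simp [Fib]; omega)
    subst hy0 hD0
    show Mq e qq k k = _
    rfl
  · -- k + Dn > k, hence y₀ ≥ 2
    have hy2 : 2 ≤ y₀ := by
      by_contra hc
      push_neg at hc
      interval_cases y₀ <;> simp [Fib] at h1 <;> omega
    set m := y₀ - 2 with hm
    have hmlt : ¬ (k + Dn ≤ Fib (m+1) * k) := h2 (m+1) (by omega)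
    push_neg at hmlt
    have hmle : Fib m * k ≤ Fib (m+1) * k := Nat.mul_le_mul_right _ (Fib_le_succ m)
    have hFib : Fib (m+2) = Fib (m+1) + Fib m := rfl
    have hFibk : Fib (m+2) * k = Fib (m+1) * k + Fib m * k := by rw [hFib, add_mul]
    have h1' : k + Dn ≤ Fib (m+2) * k := by
      rw [show m + 2 = y₀ from by omega]; exact h1
    have hy0eq : y₀ = m + 2 := by omega
    rcases Nat.even_or_odd m with hev | hod
    · have hm0 : m % 2 = 0 := Nat.even_iff.mp hev
      have hbase := (grow e k qq hk m).1 hm0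
      -- step 1 : right, t₁ = (k+Dn) - Fib m * k
      have hs1 := stepSR e qq (Fib (m+1) * k) (Fib m * k) ((k+Dn) - Fib m * k)
        (by omega) (by omega)
      rw [show Fib m * k + ((k+Dn) - Fib m * k) = k + Dn from by omega] at hs1
      -- step 2 : left, t₂ = (k+Dn) - Fib (m+1) * k
      have hs2 := stepSL e qq (Fib (m+1) * k) (k+Dn) ((k+Dn) - Fib (m+1) * k)
        (by omega) (by omega)
      rw [show Fib (m+1) * k + ((k+Dn) - Fib (m+1) * k) = k + Dn from by omega] at hs2
      rw [hy0eq]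
      exact hcompN_snoc (m+1) _ _ _ (hcompN_snoc m _ _ _ hbase hs1) hs2
    · have hm1 : m % 2 = 1 := Nat.odd_iff.mp hod
      have hbase := (grow e k qq hk m).2 hm1
      have hs1 := stepSL e qq (Fib m * k) (Fib (m+1) * k) ((k+Dn) - Fib m * k)
        (by omega) (by omega)
      rw [show Fib m * k + ((k+Dn) - Fib m * k) = k + Dn from by omega] at hs1
      have hs2 := stepSR e qq (k+Dn) (Fib (m+1) * k) ((k+Dn) - Fib (m+1) * k)
        (by omega) (by omega)
      rw [show Fib (m+1) * k + ((k+Dn) - Fib (m+1) * k) = k + Dn from by omega] at hs2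
      rw [hy0eq]
      exact hcompN_snoc (m+1) _ _ _ (hcompN_snoc m _ _ _ hbase hs1) hs2

/-! ### main theorem -/

theorem getD_mid (Z W R : List Bool) (m : ℕ) (hm : m < W.length) :
    ((Z ++ W) ++ R).getD (Z.length + m) false = W.getD m false := by
  rw [List.getD_append _ _ _ _ (by simp; omega)]
  rw [List.getD_append_right _ _ _ _ (by omega)]
  congr 1
  omega

theorem HCD_eq_fibInv'
    (e : ℕ) (he : 3 ≤ e) (u v : List Bool) (k a : ℕ)
    (hk : 1 ≤ k) (ha : k ≤ a)
    (q : List Bool)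
    (hq : q = [false, true, false, true] ++ u ++ [true, true, false, false] ++ v ++
          [false, true, true, false, true]) :
    HCD (repL (pw e) k ++ q ++ repL (rc (pw e)) k)
        (repL (pw e) a ++ q ++ repL (rc (pw e)) a)
      = (FibInv ((a : ℝ) / (k : ℝ)) : ℕ∞) := by
  obtain ⟨Dn, rfl⟩ : ∃ Dn, a = k + Dn := ⟨a - k, by omega⟩
  -- marker facts about q
  have hq1 : q.getD 1 false = true := by subst hq; simp
  have hq3 : q.getD 3 false = true := by subst hq; simp
  have hqtail : q = (([false, true, false, true] ++ u ++ [true, true, false, false]) ++ v)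
      ++ [false, true, true, false, true] := by rw [hq]
  have hqlen : q.length = u.length + v.length + 13 := by rw [hq]; simp; try omega
  set Z := (([false, true, false, true] ++ u ++ [true, true, false, false]) ++ v) with hZ
  have hZlen : Z.length = u.length + v.length + 8 := by rw [hZ]; simp; try omega
  have hqZm : ∀ m, m < 5 → q.getD (Z.length + m) false
      = ([false, true, true, false, true].getD m false) := by
    intro m hm
    rw [hqtail]
    rw [List.getD_append_right _ _ _ _ (by omega)]
    congr 1
    omega
  have hq1' : (rc q).getD 1 false = true := by
    rw [rc_getD _ _ (by omega)]
    rw [show q.length - 1 - 1 = Z.length + 3 from by omega]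
    rw [hqZm 3 (by omega)]
    rfl
  have hq4' : (rc q).getD 4 false = true := by
    rw [rc_getD _ _ (by omega)]
    rw [show q.length - 1 - 4 = Z.length + 0 from by omega]
    rw [hqZm 0 (by omega)]
    rfl
  -- existence of "11" in q and in rc q
  have hqmid : q = (([false, true, false, true] ++ u) ++ [true, true, false, false])
      ++ (v ++ [false, true, true, false, true]) := by rw [hq, hZ]; simp only [List.append_assoc]
  have hZ1len : ([false, true, false, true] ++ u).length = 4 + u.length := by simp; try omega
  have hmid : ∀ m, m < 4 → q.getD (4 + u.length + m) false
      = ([true, true, false, false].getD m false) := by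
    intro m hm
    rw [hqmid, ← hZ1len]
    exact getD_mid _ _ _ m (by simp; omega)
  have h11 : ∃ f, q.getD f false = true ∧ q.getD (f+1) false = true := by
    refine ⟨4 + u.length, ?_, ?_⟩
    · have h := hmid 0 (by omega); simpa using h
    · have h := hmid 1 (by omega); simpa using h
  have h11' : ∃ f, (rc q).getD f false = true ∧ (rc q).getD (f+1) false = true := by
    refine ⟨v.length + 5, ?_, ?_⟩
    · rw [rc_getD _ _ (by omega)]
      rw [show q.length - 1 - (v.length + 5) = 4 + u.length + 3 from by omega]
      rw [hmid 3 (by omega)]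
      rfl
    · rw [rc_getD _ _ (by omega)]
      rw [show q.length - 1 - (v.length + 5 + 1) = 4 + u.length + 2 from by omega]
      rw [hmid 2 (by omega)]
      rfl
  -- FibInv as a natural-number infimum
  have hk0 : (0:ℝ) < (k:ℝ) := by exact_mod_cast hk
  have hset : {y : ℕ | ((k + Dn : ℕ) : ℝ) / (k:ℝ) ≤ (Fib y : ℝ)}
      = {y : ℕ | k + Dn ≤ Fib y * k} := by
    ext y
    simp only [Set.mem_setOf_eq]
    rw [div_le_iff₀ hk0]
    constructor
    · intro h; exact_mod_cast h
    · intro h; exact_mod_cast h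
  have hTne : {y : ℕ | k + Dn ≤ Fib y * k}.Nonempty := by
    refine ⟨k + Dn, ?_⟩
    have h1 : k + Dn ≤ Fib (k+Dn) := le_Fib (k+Dn)
    calc k + Dn = (k+Dn) * 1 := by omega
    _ ≤ Fib (k+Dn) * k := Nat.mul_le_mul h1 hk
  have hFI : FibInv (((k + Dn : ℕ) : ℝ) / (k:ℝ)) = sInf {y : ℕ | k + Dn ≤ Fib y * k} := by
    rw [FibInv, hset]
  set y₀ := sInf {y : ℕ | k + Dn ≤ Fib y * k} with hy₀
  have hy₀mem : k + Dn ≤ Fib y₀ * k := Nat.sInf_mem hTne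
  have hy₀min : ∀ m, m < y₀ → ¬ (k + Dn ≤ Fib m * k) := fun m hm =>
    Nat.notMem_of_lt_sInf (s := {y : ℕ | k + Dn ≤ Fib y * k}) hm
  -- the two strings
  have hsrc : repL (pw e) k ++ q ++ repL (rc (pw e)) k = Mq e q k k := rfl
  have htgt : repL (pw e) (k+Dn) ++ q ++ repL (rc (pw e)) (k+Dn) = Mq e q (k+Dn) (k+Dn) := rfl
  -- conclude
  rw [hFI]
  apply le_antisymm
  · apply sInf_le
    exact ⟨y₀, rfl, by
      rw [hsrc, htgt]
      exact upper e k Dn hk q y₀ hy₀mem hy₀min⟩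
  · apply le_sInf
    rintro b ⟨m, rfl, hm⟩
    have hstg : stg e k Dn q 0 0 = Mq e q k k := by rw [stg_zero]; rfl
    have hXag : Xag e k Dn q = Mq e q (k+Dn) (k+Dn) := rfl
    rw [hsrc, htgt, ← hstg, ← hXag] at hm
    have hlow := lower_final e k Dn he hk q hq1 hq3 hq1' hq4' h11 h11' m hm
    have : y₀ ≤ m := Nat.sInf_le (show m ∈ {y : ℕ | k + Dn ≤ Fib y * k} from hlow)
    exact_mod_cast this

/-- The hairpin completion distance from `per^k · q · ⟵per^k` to `per^a · q · ⟵per^a`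
equals `Fib⁻¹(a/k)`. -/
theorem HCD_eq_fibInv
    (e : ℕ) (he : 3 ≤ e) (u v : List Bool) (k a : ℕ)
    (hk : 1 ≤ k) (ha : k ≤ a)
    (per : List Bool) (hper : per = [false, true] ++ List.replicate e false)
    (q : List Bool)
    (hq : q = [false, true, false, true] ++ u ++ [true, true, false, false] ++ v ++
          [false, true, true, false, true]) :
    HCD (repL per k ++ q ++ repL (rc per) k) (repL per a ++ q ++ repL (rc per) a)
      = (FibInv ((a : ℝ) / (k : ℝ)) : ℕ∞) := by
  have hper' : per = pw e := by rw [hper]; rfl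
  rw [hper']
  exact HCD_eq_fibInv' e he u v k a hk ha q hq
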